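/- For every k ∈ ℕ and all I, J ∈ Σ with I ≼ J, one has P(𝓘_{2k} = J) ≤ P(𝓘_{2k} = I); that is, the law of 𝓘_{2k} is decreasing with respect to the partial order ≼. -/

import Mathlib

open Finset

lemma parity_sum_le {α : Type*} [DecidableEq α] (S : Finset α) (x y : ℝ)
    (hxy : x ≤ y) :
    ∑ T ∈ S.powerset.filter (fun T => Odd (S \ T).card), y ^ T.card * x ^ (S \ T).card
    ≤ ∑ T ∈ S.powerset.filter (fun T => ¬ Odd (S \ T).card), y ^ T.card * x ^ (S \ T).card := by
  have key : ∑ T ∈ S.powerset, y ^ T.card * (-x) ^ (S \ T).card = (y - x) ^ S.card := by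
    have h := Finset.prod_add (fun _ : α => y) (fun _ : α => -x) S
    simp only [Finset.prod_const] at h
    rw [← h]
    ring_nf
  have hsplit := Finset.sum_filter_add_sum_filter_not S.powerset
      (fun T => Odd (S \ T).card) (fun T => y ^ T.card * (-x) ^ (S \ T).card)
  have hO : ∑ T ∈ S.powerset.filter (fun T => Odd (S \ T).card),
      y ^ T.card * (-x) ^ (S \ T).card
      = -∑ T ∈ S.powerset.filter (fun T => Odd (S \ T).card),
        y ^ T.card * x ^ (S \ T).card := by
    rw [← Finset.sum_neg_distrib]
    refine Finset.sum_congr rfl fun T hT => ?_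
    rw [Finset.mem_filter] at hT
    rw [Odd.neg_pow hT.2]
    ring
  have hE : ∑ T ∈ S.powerset.filter (fun T => ¬ Odd (S \ T).card),
      y ^ T.card * (-x) ^ (S \ T).card
      = ∑ T ∈ S.powerset.filter (fun T => ¬ Odd (S \ T).card),
        y ^ T.card * x ^ (S \ T).card := by
    refine Finset.sum_congr rfl fun T hT => ?_
    rw [Finset.mem_filter] at hT
    rw [Even.neg_pow (Nat.not_odd_iff_even.mp hT.2)]
  have hpow : (0:ℝ) ≤ (y - x) ^ S.card := pow_nonneg (by linarith) _
  rw [hO, hE, key] at hsplit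
  linarith

lemma step_lemma (N : ℕ) (p : Fin (N + 1) → ℝ) (hp : ∀ i, 0 ≤ p i)
    (n : ℕ) (a b : Fin (N + 1)) (hab : a ≠ b) (hpab : p a ≤ p b)
    (J J' : Fin (N + 1) → Bool) (hJa : J a = true) (hJ'a : J' a = false)
    (hJ'b : J' b = !J b) (hoff : ∀ i, i ≠ a → i ≠ b → J' i = J i) :
    ∑ ξ ∈ univ.filter (fun ξ : Fin n → Fin (N + 1) =>
        (fun i => decide (Odd ((univ.filter (fun j => ξ j = i)).card))) = J),
      ∏ j, p (ξ j)
    ≤ ∑ ξ ∈ univ.filter (fun ξ : Fin n → Fin (N + 1) =>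
        (fun i => decide (Odd ((univ.filter (fun j => ξ j = i)).card))) = J'),
      ∏ j, p (ξ j) := by
  classical
  set β : (Fin n → Fin (N + 1)) → (Fin n → Fin (N + 1)) :=
    fun ξ j => if ξ j = b then a else ξ j with hβ
  have hβne : ∀ ξ j, β ξ j ≠ b := by
    intro ξ j
    simp only [hβ]
    split <;> simp_all
  conv_lhs => rw [Finset.sum_filter,
    ← Finset.sum_fiberwise (univ : Finset (Fin n → Fin (N + 1))) β]
  conv_rhs => rw [Finset.sum_filter,
    ← Finset.sum_fiberwise (univ : Finset (Fin n → Fin (N + 1))) β]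
  refine Finset.sum_le_sum fun g _ => ?_
  by_cases hgb : ∃ j, g j = b
  · have hemp : (univ : Finset (Fin n → Fin (N + 1))).filter (fun ξ => β ξ = g) = ∅ := by
      rw [Finset.filter_eq_empty_iff]
      intro ξ _ hξ
      obtain ⟨j, hj⟩ := hgb
      exact hβne ξ j (by rw [hξ, hj])
    rw [hemp, Finset.sum_empty, Finset.sum_empty]
  · push_neg at hgb
    set S : Finset (Fin n) := univ.filter (fun j => g j = a) with hS
    set ξof : Finset (Fin n) → (Fin n → Fin (N + 1)) :=
      fun T j => if j ∈ T then b else g j with hξof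
    -- reindexing
    have reidx : ∀ F : (Fin n → Fin (N + 1)) → ℝ,
        ∑ ξ ∈ univ.filter (fun ξ => β ξ = g), F ξ = ∑ T ∈ S.powerset, F (ξof T) := by
      intro F
      refine Finset.sum_nbij' (fun ξ => univ.filter (fun j => ξ j = b)) ξof ?_ ?_ ?_ ?_ ?_
      · intro ξ hξ
        rw [Finset.mem_filter] at hξ
        rw [Finset.mem_powerset]
        intro j hj
        rw [Finset.mem_filter] at hj
        rw [hS, Finset.mem_filter]
        refine ⟨Finset.mem_univ _, ?_⟩
        rw [← hξ.2]
        simp [hβ, hj.2]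
      · intro T hT
        rw [Finset.mem_powerset] at hT
        rw [Finset.mem_filter]
        refine ⟨Finset.mem_univ _, ?_⟩
        funext j
        by_cases hj : j ∈ T
        · have hja : g j = a := by
            have := hT hj
            rw [hS, Finset.mem_filter] at this
            exact this.2
          simp [hβ, hξof, hj, hja]
        · simp [hβ, hξof, hj, hgb j]
      · intro ξ hξ
        rw [Finset.mem_filter] at hξ
        funext j
        by_cases hj : ξ j = b
        · simp [hξof, hj]
        · have : g j = ξ j := by rw [← hξ.2]; simp [hβ, hj]
          simp [hξof, hj, this]
      · intro T hT
        ext j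
        rw [Finset.mem_powerset] at hT
        by_cases hj : j ∈ T
        · simp [hξof, hj]
        · simp [hξof, hj, hgb j]
      · intro ξ hξ
        rw [Finset.mem_filter] at hξ
        congr 1
        funext j
        by_cases hj : ξ j = b
        · simp [hξof, hj]
        · have : g j = ξ j := by rw [← hξ.2]; simp [hβ, hj]
          simp [hξof, hj, this]
    simp only [reidx]
    -- counts of values of ξof T
    have cnt : ∀ T, T ∈ S.powerset → ∀ i : Fin (N + 1),
        (univ.filter (fun j => ξof T j = i)).card =
          if i = b then T.card else if i = a then (S \ T).card
            else (univ.filter (fun j => g j = i)).card := by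
      intro T hT i
      rw [Finset.mem_powerset] at hT
      by_cases hib : i = b
      · subst hib
        rw [if_pos rfl]
        congr 1
        ext j
        by_cases hj : j ∈ T
        · simp [hξof, hj]
        · simp [hξof, hj, hgb j]
      · by_cases hia : i = a
        · subst hia
          rw [if_neg hib, if_pos rfl]
          congr 1
          ext j
          by_cases hj : j ∈ T
          · simp [hξof, hj, Ne.symm hab, hS]
          · simp [hξof, hj, hS]
        · rw [if_neg hib, if_neg hia]
          congr 1
          ext j
          by_cases hj : j ∈ T
          · have hja : g j = a := by
              have := hT hj
              rw [hS, Finset.mem_filter] at this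
              exact this.2
            simp [hξof, hj, Ne.symm hib, hja, Ne.symm hia]
          · simp [hξof, hj]
    -- weight of ξof T
    have wval : ∀ T, T ∈ S.powerset →
        ∏ j, p (ξof T j) =
          (p b ^ T.card * p a ^ (S \ T).card) * ∏ j ∈ Sᶜ, p (g j) := by
      intro T hT
      rw [Finset.mem_powerset] at hT
      rw [← Finset.prod_mul_prod_compl S (fun j => p (ξof T j))]
      have h1 : ∏ j ∈ Sᶜ, p (ξof T j) = ∏ j ∈ Sᶜ, p (g j) := by
        refine Finset.prod_congr rfl fun j hj => ?_
        have hjT : j ∉ T := fun h => (Finset.mem_compl.mp hj) (hT h)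
        simp [hξof, hjT]
      have h2 : ∏ j ∈ S, p (ξof T j) = p b ^ T.card * p a ^ (S \ T).card := by
        rw [← Finset.prod_sdiff hT]
        have h3 : ∏ j ∈ T, p (ξof T j) = p b ^ T.card := by
          rw [← Finset.prod_const]
          exact Finset.prod_congr rfl fun j hj => by simp [hξof, hj]
        have h4 : ∏ j ∈ S \ T, p (ξof T j) = p a ^ (S \ T).card := by
          rw [← Finset.prod_const]
          refine Finset.prod_congr rfl fun j hj => ?_
          rw [Finset.mem_sdiff] at hj
          have hja : g j = a := by
            have := hj.1
            rw [hS, Finset.mem_filter] at this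
            exact this.2
          simp [hξof, hj.2, hja]
        rw [h3, h4]
        ring
      rw [h1, h2]
    -- characterization of the parity condition
    set baseP : Prop := ∀ i : Fin (N + 1), i ≠ a → i ≠ b →
      decide (Odd ((univ.filter (fun j => g j = i)).card)) = J i with hbaseP
    have condchar : ∀ (V : Fin (N + 1) → Bool), ∀ T ∈ S.powerset,
        ((fun i => decide (Odd ((univ.filter (fun j => ξof T j = i)).card))) = V)
          ↔ ((∀ i : Fin (N + 1), i ≠ a → i ≠ b →
              decide (Odd ((univ.filter (fun j => g j = i)).card)) = V i)
            ∧ (Odd ((S \ T).card) ↔ V a = true) ∧ (Odd T.card ↔ V b = true)) := by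
      intro V T hT
      rw [funext_iff]
      constructor
      · intro h
        refine ⟨fun i hia hib => ?_, ?_, ?_⟩
        · have := h i
          rw [cnt T hT i, if_neg hib, if_neg hia] at this
          exact this
        · have := h a
          rw [cnt T hT a, if_neg hab, if_pos rfl] at this
          rw [← this]
          simp
        · have := h b
          rw [cnt T hT b, if_pos rfl] at this
          rw [← this]
          simp
      · rintro ⟨h1, h2, h3⟩ i
        rw [cnt T hT i]
        by_cases hib : i = b
        · subst hib
          rw [if_pos rfl]
          simp [h3]
        · by_cases hia : i = a
          · subst hia
            rw [if_neg hib, if_pos rfl]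
            simp [h2]
          · rw [if_neg hib, if_neg hia]
            exact h1 i hia hib
    by_cases hbase : baseP
    · -- base compatible; compare parity sums
      have hbase' : ∀ i : Fin (N + 1), i ≠ a → i ≠ b →
          decide (Odd ((univ.filter (fun j => g j = i)).card)) = J' i := by
        intro i hia hib
        rw [hoff i hia hib]
        exact hbase i hia hib
      by_cases hpar : S.card % 2 = (if J b = true then 0 else 1)
      · -- parity compatible
        have hcondJ : ∀ T ∈ S.powerset,
            (((fun i => decide (Odd ((univ.filter (fun j => ξof T j = i)).card))) = J)
              ↔ Odd ((S \ T).card)) := by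
          intro T hT
          rw [condchar J T hT]
          have hTS := Finset.mem_powerset.mp hT
          have hc : (S \ T).card = S.card - T.card := Finset.card_sdiff_of_subset hTS
          have hle : T.card ≤ S.card := Finset.card_le_card hTS
          constructor
          · rintro ⟨-, h2, -⟩
            rw [hJa] at h2
            simpa using h2
          · intro hodd
            refine ⟨hbase, by simp [hJa, hodd], ?_⟩
            cases hJb : J b
            · rw [hJb] at hpar
              norm_num at hpar
              simp only [Nat.odd_iff] at hodd
              simp [Nat.odd_iff]
              omega
            · rw [hJb] at hpar
              norm_num at hpar
              simp only [Nat.odd_iff] at hodd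
              simp [Nat.odd_iff]
              omega
        have hcondJ' : ∀ T ∈ S.powerset,
            (((fun i => decide (Odd ((univ.filter (fun j => ξof T j = i)).card))) = J')
              ↔ ¬ Odd ((S \ T).card)) := by
          intro T hT
          rw [condchar J' T hT]
          have hTS := Finset.mem_powerset.mp hT
          have hc : (S \ T).card = S.card - T.card := Finset.card_sdiff_of_subset hTS
          have hle : T.card ≤ S.card := Finset.card_le_card hTS
          constructor
          · rintro ⟨-, h2, -⟩
            rw [hJ'a] at h2
            simp at h2
            simp [h2]
          · intro heven
            refine ⟨hbase', by rw [hJ'a]; simpa using heven, ?_⟩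
            rw [hJ'b]
            cases hJb : J b
            · rw [hJb] at hpar
              norm_num at hpar
              rw [Nat.not_odd_iff_even, Nat.even_iff] at heven
              simp [Nat.odd_iff]
              omega
            · rw [hJb] at hpar
              norm_num at hpar
              rw [Nat.not_odd_iff_even, Nat.even_iff] at heven
              simp [Nat.odd_iff]
              omega
        calc ∑ T ∈ S.powerset,
              (if ((fun i => decide (Odd ((univ.filter (fun j => ξof T j = i)).card))) = J)
                then ∏ j, p (ξof T j) else 0)
            = ∑ T ∈ S.powerset.filter (fun T => Odd ((S \ T).card)),
                (p b ^ T.card * p a ^ (S \ T).card) * ∏ j ∈ Sᶜ, p (g j) := by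
              rw [Finset.sum_filter]
              refine Finset.sum_congr rfl fun T hT => ?_
              rw [if_congr (hcondJ T hT) rfl rfl]
              split
              · exact wval T hT
              · rfl
          _ = (∑ T ∈ S.powerset.filter (fun T => Odd ((S \ T).card)),
                p b ^ T.card * p a ^ (S \ T).card) * ∏ j ∈ Sᶜ, p (g j) := by
              rw [← Finset.sum_mul]
          _ ≤ (∑ T ∈ S.powerset.filter (fun T => ¬ Odd ((S \ T).card)),
                p b ^ T.card * p a ^ (S \ T).card) * ∏ j ∈ Sᶜ, p (g j) := by
              refine mul_le_mul_of_nonneg_right (parity_sum_le S (p a) (p b) hpab) ?_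
              exact Finset.prod_nonneg fun j _ => hp _
          _ = ∑ T ∈ S.powerset,
              (if ((fun i => decide (Odd ((univ.filter (fun j => ξof T j = i)).card))) = J')
                then ∏ j, p (ξof T j) else 0) := by
              rw [Finset.sum_mul, Finset.sum_filter]
              refine Finset.sum_congr rfl fun T hT => ?_
              rw [if_congr (Iff.symm (hcondJ' T hT)) rfl rfl]
              split
              · exact (wval T hT).symm
              · rfl
      · -- parity incompatible: both sums vanish
        have hzJ : ∀ T ∈ S.powerset,
            ¬ ((fun i => decide (Odd ((univ.filter (fun j => ξof T j = i)).card))) = J) := by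
          intro T hT hcond
          rw [condchar J T hT] at hcond
          obtain ⟨-, h2, h3⟩ := hcond
          rw [hJa] at h2
          simp only [Nat.odd_iff] at h2 h3
          have hTS := Finset.mem_powerset.mp hT
          have hc : (S \ T).card = S.card - T.card := Finset.card_sdiff_of_subset hTS
          have hle : T.card ≤ S.card := Finset.card_le_card hTS
          have h2' : (S.card - T.card) % 2 = 1 := by rw [← hc]; simpa using h2
          apply hpar
          cases hJb : J b
          · rw [hJb] at h3
            norm_num at h3 ⊢
            omega
          · rw [hJb] at h3
            norm_num at h3 ⊢
            omega
        have hzJ' : ∀ T ∈ S.powerset,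
            ¬ ((fun i => decide (Odd ((univ.filter (fun j => ξof T j = i)).card))) = J') := by
          intro T hT hcond
          rw [condchar J' T hT] at hcond
          obtain ⟨-, h2, h3⟩ := hcond
          rw [hJ'a] at h2
          rw [hJ'b] at h3
          simp only [Nat.odd_iff] at h2 h3
          have hTS := Finset.mem_powerset.mp hT
          have hc : (S \ T).card = S.card - T.card := Finset.card_sdiff_of_subset hTS
          have hle : T.card ≤ S.card := Finset.card_le_card hTS
          have h2' : ¬ ((S.card - T.card) % 2 = 1) := by
            rw [← hc]; intro h; exact absurd (h2.mp h) (by simp)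
          apply hpar
          cases hJb : J b
          · rw [hJb] at h3
            norm_num at h3 ⊢
            omega
          · rw [hJb] at h3
            norm_num at h3 ⊢
            omega
        rw [Finset.sum_congr rfl fun T hT => if_neg (hzJ T hT),
          Finset.sum_congr rfl fun T hT => if_neg (hzJ' T hT)]
    · -- base incompatible: both sums vanish
      have hz : ∀ (V : Fin (N + 1) → Bool), (∀ i, i ≠ a → i ≠ b → V i = J i) →
          ∀ T ∈ S.powerset,
          ¬ ((fun i => decide (Odd ((univ.filter (fun j => ξof T j = i)).card))) = V) := by
        intro V hV T hT hcond
        rw [condchar V T hT] at hcond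
        exact hbase fun i hia hib => by rw [hcond.1 i hia hib, hV i hia hib]
      rw [Finset.sum_congr rfl fun T hT => if_neg (hz J (fun _ _ _ => rfl) T hT),
        Finset.sum_congr rfl fun T hT => if_neg (hz J' (hoff) T hT)]


def qpref (N : ℕ) (v : Fin (N + 1) → Bool) (r : ℕ) : ℕ :=
  ∑ l ∈ univ.filter (fun l : Fin (N + 1) => (l : ℕ) < r), (if v l then 1 else 0)

lemma qpref_zero (N : ℕ) (v : Fin (N + 1) → Bool) : qpref N v 0 = 0 := by
  simp [qpref]

lemma qpref_succ (N : ℕ) (v : Fin (N + 1) → Bool) (r : ℕ) (h : r < N + 1) :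
    qpref N v (r + 1) = qpref N v r + (if v ⟨r, h⟩ then 1 else 0) := by
  unfold qpref
  have hins : (univ.filter (fun l : Fin (N + 1) => (l : ℕ) < r + 1))
      = insert ⟨r, h⟩ (univ.filter (fun l : Fin (N + 1) => (l : ℕ) < r)) := by
    ext l
    simp only [Finset.mem_insert, Finset.mem_filter, Finset.mem_univ, true_and]
    constructor
    · intro hl
      by_cases hlr : (l : ℕ) = r
      · left; exact Fin.ext hlr
      · right; omega
    · rintro (rfl | hl)
      · simp
      · omega
  rw [hins, Finset.sum_insert (by simp)]
  ring

lemma qpref_succ' (N : ℕ) (v : Fin (N + 1) → Bool) (r : ℕ) (h : ¬ r < N + 1) :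
    qpref N v (r + 1) = qpref N v r := by
  unfold qpref
  congr 1
  ext l
  simp only [Finset.mem_filter, Finset.mem_univ, true_and]
  have := l.isLt
  omega

lemma qpref_stab (N : ℕ) (v : Fin (N + 1) → Bool) (r : ℕ) (h : N + 1 ≤ r) :
    qpref N v r = qpref N v (N + 1) := by
  induction r with
  | zero => omega
  | succ m ih =>
    by_cases hm : N + 1 ≤ m
    · rw [qpref_succ' N v m (by omega), ih hm]
    · have : m + 1 = N + 1 := by omega
      rw [this]

lemma qpref_cnt (N : ℕ) (v : Fin (N + 1) → Bool) :
    qpref N v (N + 1) = (univ.filter (fun i => v i = true)).card := by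
  unfold qpref
  have : (univ.filter (fun l : Fin (N + 1) => (l : ℕ) < N + 1)) = univ := by
    ext l
    simp [l.isLt, Fin.is_le]
  rw [this, Finset.card_filter]

lemma qpref_le_cnt (N : ℕ) (v : Fin (N + 1) → Bool) (r : ℕ) :
    qpref N v r ≤ (univ.filter (fun i => v i = true)).card := by
  rw [← qpref_cnt]
  by_cases h : r ≤ N + 1
  · unfold qpref
    apply Finset.sum_le_sum_of_subset
    intro l hl
    rw [Finset.mem_filter] at hl ⊢
    exact ⟨hl.1, by omega⟩
  · rw [qpref_stab N v r (by omega)]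

lemma qpref_mono (N : ℕ) (v : Fin (N + 1) → Bool) (r r' : ℕ) (h : r ≤ r') :
    qpref N v r ≤ qpref N v r' := by
  unfold qpref
  apply Finset.sum_le_sum_of_subset
  intro l hl
  rw [Finset.mem_filter] at hl ⊢
  exact ⟨hl.1, by omega⟩

lemma descent (N : ℕ) (I J : Fin (N + 1) → Bool)
    (hq : ∀ r : ℕ, qpref N I r ≤ qpref N J r)
    (hEI : Even ((univ.filter (fun i => I i = true)).card))
    (hEJ : Even ((univ.filter (fun i => J i = true)).card))
    (hne : I ≠ J) :
    ∃ (a b : Fin (N + 1)) (J' : Fin (N + 1) → Bool),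
      (a : ℕ) < (b : ℕ) ∧ J a = true ∧ J' a = false ∧ J' b = !J b ∧
      (∀ i, i ≠ a → i ≠ b → J' i = J i) ∧
      (∀ r : ℕ, qpref N I r ≤ qpref N J' r) ∧
      Even ((univ.filter (fun i => J' i = true)).card) ∧
      (∑ r ∈ Finset.range (N + 2), qpref N J' r) < ∑ r ∈ Finset.range (N + 2), qpref N J r := by
  classical
  have hA : (univ.filter (fun i => I i ≠ J i)).Nonempty := by
    rw [Finset.filter_nonempty_iff]
    obtain ⟨i, hi⟩ := Function.ne_iff.mp hne
    exact ⟨i, Finset.mem_univ i, hi⟩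
  set a : Fin (N + 1) := (univ.filter (fun i => I i ≠ J i)).min' hA with ha
  have hamem : I a ≠ J a := by
    have := Finset.min'_mem (univ.filter (fun i => I i ≠ J i)) hA
    rw [Finset.mem_filter] at this
    exact this.2
  have hagree : ∀ i : Fin (N + 1), (i : ℕ) < (a : ℕ) → I i = J i := by
    intro i hi
    by_contra hcon
    have : a ≤ i := Finset.min'_le _ i (by rw [Finset.mem_filter]; exact ⟨Finset.mem_univ _, hcon⟩)
    rw [Fin.le_def] at this
    omega
  have hqeq : ∀ r : ℕ, r ≤ (a : ℕ) → qpref N I r = qpref N J r := by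
    intro r hr
    unfold qpref
    refine Finset.sum_congr rfl fun l hl => ?_
    rw [Finset.mem_filter] at hl
    rw [hagree l (by omega)]
  have haIJ : I a = false ∧ J a = true := by
    have h1 := hq ((a : ℕ) + 1)
    rw [qpref_succ N I a a.isLt, qpref_succ N J a a.isLt] at h1
    simp only [Fin.eta] at h1
    rw [hqeq (a : ℕ) le_rfl] at h1
    cases hI : I a <;> cases hJ : J a
    · rw [hI, hJ] at hamem; simp at hamem
    · exact ⟨rfl, rfl⟩
    · rw [hI, hJ] at h1; simp at h1
    · rw [hI, hJ] at hamem; simp at hamem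
  obtain ⟨haI, haJ⟩ := haIJ
  by_cases hB : (univ.filter (fun r : Fin (N + 1) =>
      (a : ℕ) < (r : ℕ) ∧ qpref N I ((r : ℕ) + 1) = qpref N J ((r : ℕ) + 1))).Nonempty
  · -- transposition case
    obtain ⟨b, hbmem1, hbmem2, hbmin⟩ : ∃ b : Fin (N + 1), (a : ℕ) < (b : ℕ) ∧
        qpref N I ((b : ℕ) + 1) = qpref N J ((b : ℕ) + 1) ∧
        ∀ r : Fin (N + 1), (a : ℕ) < (r : ℕ) →
          qpref N I ((r : ℕ) + 1) = qpref N J ((r : ℕ) + 1) → (b : ℕ) ≤ (r : ℕ) := by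
      have h1 := Finset.min'_mem (univ.filter (fun r : Fin (N + 1) =>
        (a : ℕ) < (r : ℕ) ∧ qpref N I ((r : ℕ) + 1) = qpref N J ((r : ℕ) + 1))) hB
      rw [Finset.mem_filter] at h1
      refine ⟨_, h1.2.1, h1.2.2, fun r h1' h2' => ?_⟩
      have := Finset.min'_le (univ.filter (fun r : Fin (N + 1) =>
        (a : ℕ) < (r : ℕ) ∧ qpref N I ((r : ℕ) + 1) = qpref N J ((r : ℕ) + 1))) r
        (by rw [Finset.mem_filter]; exact ⟨Finset.mem_univ _, h1', h2'⟩)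
      rwa [Fin.le_def] at this
    have hbmem : (a : ℕ) < (b : ℕ) ∧ qpref N I ((b : ℕ) + 1) = qpref N J ((b : ℕ) + 1) :=
      ⟨hbmem1, hbmem2⟩
    have hstrict : ∀ l : ℕ, (a : ℕ) < l → l ≤ (b : ℕ) → qpref N I l < qpref N J l := by
      intro l hal hlb
      obtain ⟨m, rfl⟩ : ∃ m, l = m + 1 := ⟨l - 1, by omega⟩
      have hmN : m < N + 1 := by have := b.isLt; omega
      refine lt_of_le_of_ne (hq (m + 1)) fun heq => ?_
      by_cases hma : m = (a : ℕ)
      · rw [qpref_succ N I m hmN, qpref_succ N J m hmN] at heq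
        have hfa : (⟨m, hmN⟩ : Fin (N + 1)) = a := Fin.ext hma
        rw [hfa, haI, haJ] at heq
        norm_num at heq
        have := hqeq m (le_of_eq hma)
        omega
      · have := hbmin ⟨m, hmN⟩ ((by omega : (a : ℕ) < m)) heq
        simp only [Fin.val_mk] at this
        omega
    have hbJI : J b = false ∧ I b = true := by
      have h1 := hbmem.2
      rw [qpref_succ N I b b.isLt, qpref_succ N J b b.isLt] at h1
      simp only [Fin.eta] at h1
      have h2 := hstrict (b : ℕ) hbmem.1 le_rfl
      cases hIb : I b <;> cases hJb : J b <;> rw [hIb, hJb] at h1 <;> simp at h1 <;>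
        first
        | exact ⟨rfl, rfl⟩
        | omega
    obtain ⟨hbJ, hbI⟩ := hbJI
    have habne : a ≠ b := fun h => by rw [h] at haJ; rw [haJ] at hbJ; simp at hbJ
    set J' : Fin (N + 1) → Bool := fun i => if i = a then false else if i = b then true else J i
      with hJ'
    have hJ'a : J' a = false := by simp [hJ']
    have hJ'b : J' b = !J b := by simp [hJ', Ne.symm habne, hbJ]
    have hoff : ∀ i, i ≠ a → i ≠ b → J' i = J i := by
      intro i hia hib
      simp [hJ', hia, hib]
    -- the prefix identity
    have hkey : ∀ r : ℕ,
        qpref N J' r + (if (a : ℕ) < r ∧ r ≤ (b : ℕ) then 1 else 0) = qpref N J r := by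
      intro r
      induction r with
      | zero =>
        rw [qpref_zero, qpref_zero]
        simp
      | succ m ih =>
        by_cases hm : m < N + 1
        · rw [qpref_succ N J' m hm, qpref_succ N J m hm]
          by_cases hmf : (⟨m, hm⟩ : Fin (N + 1)) = a
          · have hma : m = (a : ℕ) := by rw [← hmf]
            have hma2 : (a:ℕ) < (b:ℕ) := hbmem.1
            rw [hmf, hJ'a, haJ]
            simp only [Bool.false_eq_true, if_false, if_true]
            split_ifs at ih ⊢ <;> omega
          · by_cases hmfb : (⟨m, hm⟩ : Fin (N + 1)) = b
            · have hmb : m = (b : ℕ) := by rw [← hmfb]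
              have hma2 : (a:ℕ) < (b:ℕ) := hbmem.1
              rw [hmfb, hJ'b, hbJ]
              simp only [Bool.not_false, if_true, Bool.false_eq_true, if_false]
              split_ifs at ih ⊢ <;> omega
            · have hma : m ≠ (a : ℕ) := fun h => hmf (Fin.ext h)
              have hmb : m ≠ (b : ℕ) := fun h => hmfb (Fin.ext h)
              rw [hoff _ hmf hmfb]
              split_ifs at ih ⊢ <;> omega
        · rw [qpref_succ' N J' m hm, qpref_succ' N J m hm]
          have := b.isLt
          split_ifs at ih ⊢ <;> omega
    refine ⟨a, b, J', hbmem.1, haJ, hJ'a, hJ'b, hoff, ?_, ?_, ?_⟩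
    · intro r
      have h1 := hkey r
      by_cases hc : (a : ℕ) < r ∧ r ≤ (b : ℕ)
      · have := hstrict r hc.1 hc.2
        rw [if_pos hc] at h1
        omega
      · rw [if_neg hc] at h1
        have := hq r
        omega
    · have h1 := hkey (N + 1)
      have := b.isLt
      rw [if_neg (by omega)] at h1
      rw [← qpref_cnt, ← h1, qpref_cnt] at hEJ
      simpa using hEJ
    · apply Finset.sum_lt_sum
      · intro r _
        have h1 := hkey r
        split_ifs at h1 <;> omega
      · refine ⟨(a : ℕ) + 1, Finset.mem_range.mpr (by have := a.isLt; omega), ?_⟩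
        have h1 := hkey ((a : ℕ) + 1)
        rw [if_pos (by constructor <;> omega)] at h1
        omega
  · -- removal case
    have hstrict : ∀ l : ℕ, (a : ℕ) < l → l ≤ N + 1 → qpref N I l < qpref N J l := by
      intro l hal hlN
      obtain ⟨m, rfl⟩ : ∃ m, l = m + 1 := ⟨l - 1, by omega⟩
      have hmN : m < N + 1 := by omega
      refine lt_of_le_of_ne (hq (m + 1)) fun heq => ?_
      by_cases hma : m = (a : ℕ)
      · rw [qpref_succ N I m hmN, qpref_succ N J m hmN] at heq
        have hfa : (⟨m, hmN⟩ : Fin (N + 1)) = a := Fin.ext hma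
        rw [hfa, haI, haJ] at heq
        norm_num at heq
        have := hqeq m (le_of_eq hma)
        omega
      · exact hB ⟨⟨m, hmN⟩, by rw [Finset.mem_filter]; exact ⟨Finset.mem_univ _, (by omega : (a : ℕ) < m), heq⟩⟩
    have hcnt2 : (univ.filter (fun i => I i = true)).card + 2
        ≤ (univ.filter (fun i => J i = true)).card := by
      have h1 := hstrict (N + 1) (by have := a.isLt; omega) le_rfl
      rw [qpref_cnt, qpref_cnt] at h1
      rw [Nat.even_iff] at hEI hEJ
      omega
    have hJne : (univ.filter (fun i => J i = true)).Nonempty := by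
      rw [← Finset.card_pos]
      omega
    set b : Fin (N + 1) := (univ.filter (fun i => J i = true)).max' hJne with hb
    have hbJ : J b = true := by
      have := Finset.max'_mem (univ.filter (fun i => J i = true)) hJne
      rw [Finset.mem_filter] at this
      exact this.2
    have hble : ∀ i : Fin (N + 1), J i = true → (i : ℕ) ≤ (b : ℕ) := by
      intro i hi
      have := Finset.le_max' (univ.filter (fun i => J i = true)) i
        (by rw [Finset.mem_filter]; exact ⟨Finset.mem_univ _, hi⟩)
      rwa [Fin.le_def] at this
    have hqJfull : ∀ r : ℕ, (b : ℕ) < r → qpref N J r = (univ.filter (fun i => J i = true)).card := by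
      intro r hr
      unfold qpref
      rw [Finset.card_filter]
      apply Finset.sum_subset (Finset.filter_subset _ _)
      · intro l _ hl
        rw [Finset.mem_filter] at hl
        simp only [Finset.mem_univ, true_and, not_lt] at hl
        have : J l = false := by
          cases hJl : J l
          · rfl
          · have := hble l hJl; omega
        simp [this]
    have hab : (a : ℕ) < (b : ℕ) := by
      by_contra hcon
      push_neg at hcon
      have h1 : qpref N J ((a : ℕ) + 1) = (univ.filter (fun i => J i = true)).card :=
        hqJfull _ (by omega)
      have h2 : qpref N J ((a : ℕ) + 1) = qpref N J (a : ℕ) + 1 := by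
        rw [qpref_succ N J a a.isLt]
        simp only [Fin.eta]
        rw [haJ]
        simp
      have h3 := hqeq (a : ℕ) le_rfl
      have h4 := qpref_le_cnt N I (a : ℕ)
      omega
    have habne : a ≠ b := fun h => by rw [h] at haJ; omega
    set J' : Fin (N + 1) → Bool := fun i => if i = a then false else if i = b then false else J i
      with hJ'
    have hJ'a : J' a = false := by simp [hJ']
    have hJ'b : J' b = !J b := by simp [hJ', Ne.symm habne, hbJ]
    have hoff : ∀ i, i ≠ a → i ≠ b → J' i = J i := by
      intro i hia hib
      simp [hJ', hia, hib]
    have hkey : ∀ r : ℕ,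
        qpref N J' r + (if (a : ℕ) < r then 1 else 0) + (if (b : ℕ) < r then 1 else 0)
          = qpref N J r := by
      intro r
      induction r with
      | zero =>
        rw [qpref_zero, qpref_zero]
        simp
      | succ m ih =>
        by_cases hm : m < N + 1
        · rw [qpref_succ N J' m hm, qpref_succ N J m hm]
          by_cases hmf : (⟨m, hm⟩ : Fin (N + 1)) = a
          · have hma : m = (a : ℕ) := by rw [← hmf]
            rw [hmf, hJ'a, haJ]
            simp only [Bool.false_eq_true, if_false, if_true]
            split_ifs at ih ⊢ <;> omega
          · by_cases hmfb : (⟨m, hm⟩ : Fin (N + 1)) = b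
            · have hmb : m = (b : ℕ) := by rw [← hmfb]
              rw [hmfb, hJ'b, hbJ]
              simp only [Bool.not_true, Bool.false_eq_true, if_false]
              split_ifs at ih ⊢ <;> omega
            · have hma : m ≠ (a : ℕ) := fun h => hmf (Fin.ext h)
              have hmb : m ≠ (b : ℕ) := fun h => hmfb (Fin.ext h)
              rw [hoff _ hmf hmfb]
              split_ifs at ih ⊢ <;> omega
        · rw [qpref_succ' N J' m hm, qpref_succ' N J m hm]
          have := b.isLt
          have := a.isLt
          split_ifs at ih ⊢ <;> omega
    refine ⟨a, b, J', hab, haJ, hJ'a, hJ'b, hoff, ?_, ?_, ?_⟩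
    · intro r
      have h1 := hkey r
      by_cases hc1 : (a : ℕ) < r
      · by_cases hc2 : (b : ℕ) < r
        · have h2 := hqJfull r hc2
          have h3 := qpref_le_cnt N I r
          rw [if_pos hc1, if_pos hc2] at h1
          omega
        · have h4 : r ≤ N + 1 := by have := b.isLt; omega
          have := hstrict r hc1 h4
          rw [if_pos hc1, if_neg hc2] at h1
          omega
      · rw [if_neg hc1, if_neg (by have := hab; omega)] at h1
        have := hq r
        omega
    · have h1 := hkey (N + 1)
      have hb1 := b.isLt
      have ha1 := a.isLt
      rw [if_pos (by omega), if_pos (by omega), qpref_cnt N J', qpref_cnt N J] at h1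
      rw [Nat.even_iff] at hEJ ⊢
      omega
    · apply Finset.sum_lt_sum
      · intro r _
        have h1 := hkey r
        split_ifs at h1 <;> omega
      · refine ⟨(a : ℕ) + 1, Finset.mem_range.mpr (by have := a.isLt; omega), ?_⟩
        have h1 := hkey ((a : ℕ) + 1)
        rw [if_pos (by omega)] at h1
        split_ifs at h1 <;> omega


lemma main_aux (N : ℕ) (p : Fin (N + 1) → ℝ) (hp : ∀ i, 0 ≤ p i)
    (hmono : Monotone p) (n : ℕ) (I : Fin (N + 1) → Bool)
    (hEI : Even ((univ.filter (fun i => I i = true)).card)) :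
    ∀ (μ : ℕ) (J : Fin (N + 1) → Bool),
      Even ((univ.filter (fun i => J i = true)).card) →
      (∀ r : ℕ, qpref N I r ≤ qpref N J r) →
      (∑ r ∈ Finset.range (N + 2), qpref N J r) ≤ μ →
      ∑ ξ ∈ univ.filter (fun ξ : Fin n → Fin (N + 1) =>
          (fun i => decide (Odd ((univ.filter (fun j => ξ j = i)).card))) = J),
        ∏ j, p (ξ j)
      ≤ ∑ ξ ∈ univ.filter (fun ξ : Fin n → Fin (N + 1) =>
          (fun i => decide (Odd ((univ.filter (fun j => ξ j = i)).card))) = I),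
        ∏ j, p (ξ j) := by
  intro μ
  induction μ using Nat.strong_induction_on with
  | _ μ ih =>
    intro J hEJ hq hμ
    by_cases hIJ : I = J
    · subst hIJ
      exact le_refl _
    · obtain ⟨a, b, J', hab, haJ, hJ'a, hJ'b, hoff, hq', hEJ', hmeas⟩ :=
        descent N I J hq hEI hEJ hIJ
    
      have habne : a ≠ b := fun h => by rw [h] at hab; omega
      have hpab : p a ≤ p b := hmono (by rw [Fin.le_def]; omega)
      have h1 := step_lemma N p hp n a b habne hpab J J' haJ hJ'a hJ'b hoff
      refine le_trans h1 ?_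
      exact ih (∑ r ∈ Finset.range (N + 2), qpref N J' r) (lt_of_lt_of_le hmeas hμ)
        J' hEJ' hq' (le_refl _)

/-- Lemma 3.8(i): the law of the parity vector `𝓘_{2k}` of the multinomial occupation
numbers (with probabilities `p_0 ≤ … ≤ p_N`, here encoded by the product weight
`∏ j, p (ξ j)` over i.i.d. samples `ξ : Fin (2k) → Fin (N+1)`) is decreasing with
respect to the partial order `≼` on `Σ`:
if `I, J` have an even number of ones and `I ≼ J`, then `P(𝓘_{2k} = J) ≤ P(𝓘_{2k} = I)`. -/
theorem lemma_3_8_i (N : ℕ) (p : Fin (N + 1) → ℝ) (hp : ∀ i, 0 ≤ p i)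
    (hmono : Monotone p) (hsum : ∑ i, p i = 1)
    (k : ℕ) (I J : Fin (N + 1) → Bool)
    (hI : Even ((univ.filter (fun i => I i = true)).card))
    (hJ : Even ((univ.filter (fun i => J i = true)).card))
    (hIJ : ∀ r : Fin (N + 1),
      ∑ l ∈ Finset.Iic r, (if I l then (1 : ℕ) else 0)
        ≤ ∑ l ∈ Finset.Iic r, (if J l then 1 else 0)) :
    ∑ ξ ∈ univ.filter (fun ξ : Fin (2 * k) → Fin (N + 1) =>
        (fun i => decide (Odd ((univ.filter (fun j => ξ j = i)).card))) = J),
      ∏ j, p (ξ j)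
    ≤ ∑ ξ ∈ univ.filter (fun ξ : Fin (2 * k) → Fin (N + 1) =>
        (fun i => decide (Odd ((univ.filter (fun j => ξ j = i)).card))) = I),
      ∏ j, p (ξ j) := by
  have hiic : ∀ (v : Fin (N + 1) → Bool) (r : Fin (N + 1)),
      (∑ l ∈ Finset.Iic r, (if v l then (1 : ℕ) else 0)) = qpref N v ((r : ℕ) + 1) := by
    intro v r
    unfold qpref
    refine Finset.sum_congr ?_ fun l _ => rfl
    ext l
    rw [Finset.mem_Iic, Finset.mem_filter, Fin.le_def]
    have := l.isLt
    constructor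
    · intro h; exact ⟨Finset.mem_univ _, by omega⟩
    · intro h; omega
  have hq : ∀ r : ℕ, qpref N I r ≤ qpref N J r := by
    intro r
    match r with
    | 0 => rw [qpref_zero, qpref_zero]
    | m + 1 =>
      by_cases hm : m < N + 1
      · have := hIJ ⟨m, hm⟩
        rw [hiic I ⟨m, hm⟩, hiic J ⟨m, hm⟩] at this
        exact this
      · rw [qpref_stab N I (m + 1) (by omega), qpref_stab N J (m + 1) (by omega)]
        have := hIJ (Fin.last N)
        rw [hiic I (Fin.last N), hiic J (Fin.last N)] at this
        simpa using this
  exact main_aux N p hp hmono (2 * k) I hI (∑ r ∈ Finset.range (N + 2), qpref N J r)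
    J hJ hq (le_refl _)
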